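/- Let (Ω, F, P) be a probability space with a filtration (F_k)_{k≥0}. Let d ≥ 1, let F : ℝ^d → ℝ be differentiable with L-Lipschitz gradient (L > 0) and bounded below by F_low. Fix α ∈ [0, π/2), nonnegative constants E', A, B, C with B·E' > 0, and p ∈ (1/2, 1), and set α_k := (1 − sin α)/(L·B·E'·(k+1)^p) for all k ≥ 0. Let (w_k)_{k≥0}, (A_k)_{k≥0}, (G_k)_{k≥0} be sequences of ℝ^d-valued random vectors with w_k F_k-measurable, ‖A_k‖² and ‖G_k‖² integrable, and w_{k+1} = w_k − α_k·A_k. Suppose for every k ≥ 0, almost surely: (i) ⟨E[A_k | F_k], ∇F(w_k)⟩ ≥ (1 − sin α)·‖∇F(w_k)‖²; (ii) E[‖A_k‖² | F_k] ≤ E'·E[‖G_k‖² | F_k]; (iii) E[G_k | F_k] = ∇F(w_k); (iv) E[‖G_k‖² | F_k] ≤ 2·A·(F(w_k) − F_low) + B·‖∇F(w_k)‖² + C. Define A' := A·E', C' := C·E', δ_0 := F(w_0) − F_low (assuming w_0 is deterministic), and Q := ∑_{k=0}^{∞} α_k² (which is finite). Then for every K ≥ 1, min_{0 ≤ k ≤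 K-1} E[‖∇F(w_k)‖] ≤ ( exp(L·A'·Q)·(2·δ_0 + L·C'·Q) / ((1 − sin α)·α_0) )^{1/2} · K^{-(1-p)/2}; in particular min_{0 ≤ k ≤ K-1} E[‖∇F(w_k)‖] = O(K^{-(1-p)/2}) as K → ∞. -/

import Mathlib

open MeasureTheory Filter
open scoped RealInnerProductSpace

lemma my_grad_cont {d : ℕ} (F : EuclideanSpace ℝ (Fin d) → ℝ) (L : ℝ) (hL : 0 ≤ L)
    (hlip : ∀ x y, ‖gradient F x - gradient F y‖ ≤ L * ‖x - y‖) :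
    Continuous (gradient F) := by
  refine (LipschitzWith.of_dist_le_mul (K := L.toNNReal) fun x y => ?_).continuous
  rw [dist_eq_norm, dist_eq_norm, Real.coe_toNNReal _ hL]
  exact hlip x y

lemma my_descent {d : ℕ} (F : EuclideanSpace ℝ (Fin d) → ℝ) (L : ℝ) (hL : 0 ≤ L)
    (hF : Differentiable ℝ F)
    (hlip : ∀ x y, ‖gradient F x - gradient F y‖ ≤ L * ‖x - y‖)
    (x v : EuclideanSpace ℝ (Fin d)) :
    F (x + v) ≤ F x + ⟪gradient F x, v⟫ + L / 2 * ‖v‖ ^ 2 := by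
  have hgc : Continuous (gradient F) := my_grad_cont F L hL hlip
  have hφ : ∀ t : ℝ, HasDerivAt (fun t : ℝ => F (x + t • v))
      ⟪gradient F (x + t • v), v⟫ t := by
    intro t
    have hline : HasDerivAt (fun t : ℝ => x + t • v) v t := by
      simpa using ((hasDerivAt_id t).smul_const v).const_add x
    have hFd : HasFDerivAt F
        ((InnerProductSpace.toDual ℝ _) (gradient F (x + t • v))) (x + t • v) :=
      (hF _).hasGradientAt.hasFDerivAt
    have := hFd.comp_hasDerivAt t hline
    simpa [InnerProductSpace.toDual_apply_apply, Function.comp_def] using this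
  have hcont : Continuous (fun t : ℝ => ⟪gradient F (x + t • v), v⟫) :=
    (hgc.comp (continuous_const.add (continuous_id.smul continuous_const))).inner
      continuous_const
  have hftc : ∫ t in (0:ℝ)..1, ⟪gradient F (x + t • v), v⟫
      = F (x + v) - F x := by
    have := intervalIntegral.integral_eq_sub_of_hasDerivAt
      (f := fun t : ℝ => F (x + t • v))
      (f' := fun t : ℝ => ⟪gradient F (x + t • v), v⟫)
      (a := 0) (b := 1) (fun t _ => hφ t) (hcont.intervalIntegrable 0 1)
    simpa using this
  have hbound : ∫ t in (0:ℝ)..1, ⟪gradient F (x + t • v), v⟫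
      ≤ ∫ t in (0:ℝ)..1, (⟪gradient F x, v⟫ + L * ‖v‖ ^ 2 * t) := by
    refine intervalIntegral.integral_mono_on (by norm_num)
      (hcont.intervalIntegrable 0 1)
      ((continuous_const.add (continuous_const.mul continuous_id)).intervalIntegrable 0 1)
      fun t ht => ?_
    have h1 : ⟪gradient F (x + t • v), v⟫ - ⟪gradient F x, v⟫
        = ⟪gradient F (x + t • v) - gradient F x, v⟫ := by
      rw [inner_sub_left]
    have h2 : ⟪gradient F (x + t • v) - gradient F x, v⟫
        ≤ ‖gradient F (x + t • v) - gradient F x‖ * ‖v‖ := real_inner_le_norm _ _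
    have h3 : ‖gradient F (x + t • v) - gradient F x‖ ≤ L * (t * ‖v‖) := by
      have := hlip (x + t • v) x
      simpa [norm_smul, abs_of_nonneg ht.1] using this
    nlinarith [norm_nonneg v, ht.1, mul_le_mul_of_nonneg_right h3 (norm_nonneg v)]
  have hval : ∫ t in (0:ℝ)..1, (⟪gradient F x, v⟫ + L * ‖v‖ ^ 2 * t)
      = ⟪gradient F x, v⟫ + L / 2 * ‖v‖ ^ 2 := by
    rw [intervalIntegral.integral_add intervalIntegrable_const
      (IntervalIntegrable.const_mul (intervalIntegral.intervalIntegrable_id) _)]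
    rw [intervalIntegral.integral_const_mul, integral_id]
    simp
    ring
  linarith [hftc ▸ hbound, hval ▸ hbound]

lemma my_coord_abs_le {d : ℕ} (x : EuclideanSpace ℝ (Fin d)) (i : Fin d) : |x i| ≤ ‖x‖ := by
  rw [← Real.sqrt_sq_eq_abs, EuclideanSpace.norm_eq]
  apply Real.sqrt_le_sqrt
  have : (x i) ^ 2 = ‖x i‖ ^ 2 := by rw [Real.norm_eq_abs, sq_abs]
  rw [this]
  exact Finset.single_le_sum (fun j _ => sq_nonneg ‖x j‖) (Finset.mem_univ i)

lemma my_condexp_coord {Ω : Type*} {m mΩ : MeasurableSpace Ω} (hm : m ≤ mΩ)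
    {μ : Measure Ω} [IsProbabilityMeasure μ] {d : ℕ}
    {X : Ω → EuclideanSpace ℝ (Fin d)} (hX : Integrable X μ) (i : Fin d) :
    (fun ω => (μ[X|m]) ω i) =ᵐ[μ] μ[fun ω => X ω i|m] := by
  haveI : SigmaFinite (μ.trim hm) := by
    have : IsFiniteMeasure (μ.trim hm) := isFiniteMeasure_trim hm
    infer_instance
  refine ae_eq_condExp_of_forall_setIntegral_eq hm ?_ ?_ ?_ ?_
  · exact (EuclideanSpace.proj i : EuclideanSpace ℝ (Fin d) →L[ℝ] ℝ).integrable_comp hX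
  · intro s hs hμs
    exact ((EuclideanSpace.proj i : EuclideanSpace ℝ (Fin d) →L[ℝ] ℝ).integrable_comp
      integrable_condExp).integrableOn
  · intro s hs hμs
    have h1 := (EuclideanSpace.proj i : EuclideanSpace ℝ (Fin d) →L[ℝ] ℝ).integral_comp_comm
        (integrable_condExp (f := X) (m := m)).integrableOn (μ := μ.restrict s)
    have h2 := (EuclideanSpace.proj i : EuclideanSpace ℝ (Fin d) →L[ℝ] ℝ).integral_comp_comm
        (hX.integrableOn (s := s))
    simp only [PiLp.proj_apply] at h1 h2
    rw [show (∫ x in s, (μ[X|m]) x i ∂μ) = (∫ x in s, (μ[X|m]) x ∂μ) i from h1,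
      show (∫ x in s, X x i ∂μ) = (∫ x in s, X x ∂μ) i from h2,
      setIntegral_condExp hm hX hs]
  · exact StronglyMeasurable.aestronglyMeasurable
      (((EuclideanSpace.proj i :
          EuclideanSpace ℝ (Fin d) →L[ℝ] ℝ).continuous).comp_stronglyMeasurable
        stronglyMeasurable_condExp)

lemma my_integral_inner_condexp {Ω : Type*} {m mΩ : MeasurableSpace Ω} (hm : m ≤ mΩ)
    {μ : Measure Ω} [IsProbabilityMeasure μ] {d : ℕ}
    {X f : Ω → EuclideanSpace ℝ (Fin d)}
    (hf : StronglyMeasurable[m] f)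
    (hX : Integrable X μ) (hXsq : Integrable (fun ω => ‖X ω‖ ^ 2) μ)
    (hfsq : Integrable (fun ω => ‖f ω‖ ^ 2) μ) :
    Integrable (fun ω => ⟪(μ[X|m]) ω, f ω⟫) μ ∧
      ∫ ω, ⟪f ω, X ω⟫ ∂μ = ∫ ω, ⟪(μ[X|m]) ω, f ω⟫ ∂μ := by
  haveI : SigmaFinite (μ.trim hm) := by
    have : IsFiniteMeasure (μ.trim hm) := isFiniteMeasure_trim hm
    infer_instance
  have hfm : StronglyMeasurable[mΩ] f := hf.mono hm
  have hfi : ∀ i : Fin d, StronglyMeasurable[m] (fun ω => f ω i) := fun i =>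
    (EuclideanSpace.proj i : EuclideanSpace ℝ (Fin d) →L[ℝ] ℝ).continuous.comp_stronglyMeasurable hf
  have hXi : ∀ i : Fin d, Integrable (fun ω => X ω i) μ := fun i => by
    have := (EuclideanSpace.proj i : EuclideanSpace ℝ (Fin d) →L[ℝ] ℝ).integrable_comp hX
    simpa using this
  have hbound : ∀ (u v : EuclideanSpace ℝ (Fin d)) (i : Fin d),
      ‖u i * v i‖ ≤ (‖u‖ ^ 2 + ‖v‖ ^ 2) / 2 := by
    intro u v i
    rw [Real.norm_eq_abs, abs_mul]
    have hu : |u i| ^ 2 ≤ ‖u‖ ^ 2 :=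
      pow_le_pow_left₀ (abs_nonneg _) (my_coord_abs_le u i) 2
    have hv : |v i| ^ 2 ≤ ‖v‖ ^ 2 :=
      pow_le_pow_left₀ (abs_nonneg _) (my_coord_abs_le v i) 2
    nlinarith [sq_nonneg (|u i| - |v i|)]
  have hq_int : ∀ i : Fin d, Integrable (fun ω => f ω i * X ω i) μ := by
    intro i
    refine Integrable.mono' ((hfsq.add hXsq).div_const 2) ?_ ?_
    · exact ((hfi i).mono hm).aestronglyMeasurable.mul ((hXi i).aestronglyMeasurable)
    · exact Filter.Eventually.of_forall fun ω => hbound (f ω) (X ω) i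
  have hkey : ∀ i : Fin d,
      (μ[fun ω => f ω i * X ω i|m]) =ᵐ[μ] fun ω => f ω i * (μ[X|m]) ω i := by
    intro i
    have h1 : (μ[fun ω => f ω i * X ω i|m]) =ᵐ[μ] fun ω => f ω i * (μ[fun ω' => X ω' i|m]) ω := by
      have := condExp_mul_of_stronglyMeasurable_left (μ := μ) (hfi i)
        (by simpa [Pi.mul_def] using hq_int i) (hXi i)
      simpa [Pi.mul_def] using this
    refine h1.trans ?_
    filter_upwards [my_condexp_coord hm hX i] with ω hω
    rw [← hω]
  have hr_int : ∀ i : Fin d, Integrable (fun ω => f ω i * (μ[X|m]) ω i) μ := fun i =>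
    (integrable_condExp (f := fun ω => f ω i * X ω i)).congr (hkey i)
  have hir : ∀ i : Fin d, ∫ ω, f ω i * X ω i ∂μ = ∫ ω, f ω i * (μ[X|m]) ω i ∂μ := by
    intro i
    rw [show (∫ ω, f ω i * X ω i ∂μ)
        = ∫ ω, (μ[fun ω' => f ω' i * X ω' i|m]) ω ∂μ from (integral_condExp hm).symm]
    exact integral_congr_ae (hkey i)
  have hinner_fX : ∀ ω, ⟪f ω, X ω⟫ = ∑ i : Fin d, f ω i * X ω i := by
    intro ω
    simp [PiLp.inner_apply, RCLike.inner_apply, conj_trivial, mul_comm]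
  have hinner_cf : ∀ ω, ⟪(μ[X|m]) ω, f ω⟫ = ∑ i : Fin d, f ω i * (μ[X|m]) ω i := by
    intro ω
    simp [PiLp.inner_apply, RCLike.inner_apply, conj_trivial, mul_comm]
  constructor
  · have : Integrable (fun ω => ∑ i : Fin d, f ω i * (μ[X|m]) ω i) μ :=
      integrable_finset_sum _ fun i _ => hr_int i
    exact this.congr (Filter.Eventually.of_forall fun ω => (hinner_cf ω).symm)
  · calc ∫ ω, ⟪f ω, X ω⟫ ∂μ = ∫ ω, ∑ i : Fin d, f ω i * X ω i ∂μ := by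
          simp_rw [hinner_fX]
      _ = ∑ i : Fin d, ∫ ω, f ω i * X ω i ∂μ := integral_finset_sum _ fun i _ => hq_int i
      _ = ∑ i : Fin d, ∫ ω, f ω i * (μ[X|m]) ω i ∂μ := by simp_rw [hir]
      _ = ∫ ω, ∑ i : Fin d, f ω i * (μ[X|m]) ω i ∂μ :=
          (integral_finset_sum _ fun i _ => hr_int i).symm
      _ = ∫ ω, ⟪(μ[X|m]) ω, f ω⟫ ∂μ := by simp_rw [hinner_cf]

lemma my_sq_integral_le {Ω : Type*} {mΩ : MeasurableSpace Ω} (μ : Measure Ω)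
    [IsProbabilityMeasure μ] {f : Ω → ℝ} (hf : Integrable f μ)
    (hf2 : Integrable (fun ω => f ω ^ 2) μ) :
    (∫ ω, f ω ∂μ) ^ 2 ≤ ∫ ω, f ω ^ 2 ∂μ := by
  set c := ∫ ω, f ω ∂μ with hc
  have h0 : 0 ≤ ∫ ω, (f ω - c) ^ 2 ∂μ := integral_nonneg fun ω => sq_nonneg _
  have hexp : ∀ ω : Ω, (f ω - c) ^ 2 = f ω ^ 2 - 2 * c * f ω + c ^ 2 := fun ω => by ring
  have hint : ∫ ω, (f ω - c) ^ 2 ∂μ = (∫ ω, f ω ^ 2 ∂μ) - 2 * c * c + c ^ 2 := by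
    simp_rw [hexp]
    have hsub : Integrable (fun ω => f ω ^ 2 - 2 * c * f ω) μ := hf2.sub (hf.const_mul (2 * c))
    rw [integral_add hsub (integrable_const _), integral_sub hf2 (hf.const_mul (2 * c)),
      MeasureTheory.integral_const_mul, integral_const]
    simp [← hc]
  nlinarith [h0, hint]

set_option maxHeartbeats 2000000 in
/-- explicit-constant `O(1/K^{(1-p)/2})` convergence rate for Byzantine
Resilient SGD with learning rates `α_k = (1 - sin α)/(L·B·E'·(k+1)^p)`, where
`A' := A·E'`, `C' := C·E'`, `δ_0 := F(w_0) - F_low` (with `w_0` deterministic) and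
`Q := ∑_{k=0}^∞ α_k²` (a convergent series, written as a `tsum`). -/
theorem brsgd_rate_bigO
    {Ω : Type*} {mΩ : MeasurableSpace Ω} {μ : Measure Ω} [IsProbabilityMeasure μ]
    (ℱ : Filtration ℕ mΩ)
    (d : ℕ) (hd : 1 ≤ d)
    (F : EuclideanSpace ℝ (Fin d) → ℝ) (L : ℝ) (hL : 0 < L)
    (hF_diff : Differentiable ℝ F)
    (hF_lip : ∀ x y, ‖gradient F x - gradient F y‖ ≤ L * ‖x - y‖)
    (Flow : ℝ) (hF_low : ∀ x, Flow ≤ F x)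
    (α : ℝ) (hα0 : 0 ≤ α) (hα1 : α < Real.pi / 2)
    (E' A B C : ℝ) (hE' : 0 ≤ E') (hA : 0 ≤ A) (hB : 0 ≤ B) (hC : 0 ≤ C)
    (hBE' : 0 < B * E') (p : ℝ) (hp1 : 1 / 2 < p) (hp2 : p < 1)
    (lr : ℕ → ℝ)
    (hlr : ∀ k : ℕ, lr k = (1 - Real.sin α) / (L * B * E' * ((k : ℝ) + 1) ^ p))
    (w Agg G : ℕ → Ω → EuclideanSpace ℝ (Fin d))
    (hw_meas : ∀ k, StronglyMeasurable[ℱ k] (w k))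
    (hAgg_int : ∀ k, Integrable (fun ω => ‖Agg k ω‖ ^ 2) μ)
    (hG_int : ∀ k, Integrable (fun ω => ‖G k ω‖ ^ 2) μ)
    (hupdate : ∀ k, ∀ ω, w (k + 1) ω = w k ω - lr k • Agg k ω)
    (hi : ∀ k, ∀ᵐ ω ∂μ,
      ⟪(μ[Agg k|ℱ k]) ω, gradient F (w k ω)⟫ ≥
        (1 - Real.sin α) * ‖gradient F (w k ω)‖ ^ 2)
    (hii : ∀ k, ∀ᵐ ω ∂μ,
      (μ[(fun ω' => ‖Agg k ω'‖ ^ 2)|ℱ k]) ω ≤ E' * (μ[(fun ω' => ‖G k ω'‖ ^ 2)|ℱ k]) ω)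
    (hiii : ∀ k, ∀ᵐ ω ∂μ, (μ[G k|ℱ k]) ω = gradient F (w k ω))
    (hiv : ∀ k, ∀ᵐ ω ∂μ,
      (μ[(fun ω' => ‖G k ω'‖ ^ 2)|ℱ k]) ω ≤
        2 * A * (F (w k ω) - Flow) + B * ‖gradient F (w k ω)‖ ^ 2 + C)
    (w0 : EuclideanSpace ℝ (Fin d)) (hw0 : ∀ ω, w 0 ω = w0) :
    (∀ K : ℕ, 1 ≤ K →
      (⨅ k : Fin K, ∫ ω, ‖gradient F (w k ω)‖ ∂μ) ≤
        (Real.exp (L * (A * E') * ∑' k : ℕ, (lr k) ^ 2) *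
            (2 * (F w0 - Flow) + L * (C * E') * ∑' k : ℕ, (lr k) ^ 2) /
          ((1 - Real.sin α) * lr 0)) ^ ((1 : ℝ) / 2) * (K : ℝ) ^ (-((1 - p) / 2))) ∧
    (fun K : ℕ => ⨅ k : Fin K, ∫ ω, ‖gradient F (w k ω)‖ ∂μ) =O[atTop]
      fun K : ℕ => (K : ℝ) ^ (-((1 - p) / 2)) := by
  -- basic positivity facts
  have hpi : 0 < Real.pi := Real.pi_pos
  have hs1 : Real.sin α < 1 := by
    have h := Real.sin_lt_sin_of_lt_of_le_pi_div_two (x := α) (y := Real.pi / 2)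
      (by linarith) (le_refl _) hα1
    rwa [Real.sin_pi_div_two] at h
  have hc0 : 0 < 1 - Real.sin α := by linarith
  have hD : 0 < L * B * E' := by rw [mul_assoc]; exact mul_pos hL hBE'
  have hrpow_pos : ∀ k : ℕ, (0:ℝ) < ((k : ℝ) + 1) ^ p :=
    fun k => Real.rpow_pos_of_pos (by positivity) p
  have hrpow_one : ∀ k : ℕ, (1:ℝ) ≤ ((k : ℝ) + 1) ^ p := by
    intro k
    calc (1:ℝ) = 1 ^ p := (Real.one_rpow p).symm
    _ ≤ ((k : ℝ) + 1) ^ p := by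
      have h0 : (0:ℝ) ≤ (k : ℝ) := Nat.cast_nonneg k
      exact Real.rpow_le_rpow zero_le_one (by linarith) (by linarith)
  have hlr_pos : ∀ k, 0 < lr k := by
    intro k; rw [hlr k]; exact div_pos hc0 (mul_pos hD (hrpow_pos k))
  have hlr_mulD : ∀ k, lr k * (L * B * E') ≤ 1 - Real.sin α := by
    intro k
    have ht := hrpow_pos k
    rw [hlr k, div_mul_eq_mul_div, div_le_iff₀ (by positivity)]
    nlinarith [mul_pos hc0 hD, hrpow_one k]
  have hlr_anti : ∀ j k : ℕ, j ≤ k → lr k ≤ lr j := by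
    intro j k hjk
    rw [hlr j, hlr k]
    have hjk' : ((j:ℝ) + 1) ≤ (k:ℝ) + 1 := by
      have : (j:ℝ) ≤ (k:ℝ) := Nat.cast_le.2 hjk
      linarith
    apply div_le_div_of_nonneg_left hc0.le (mul_pos hD (hrpow_pos j))
    exact mul_le_mul_of_nonneg_left
      (Real.rpow_le_rpow (by positivity) hjk' (by linarith)) hD.le
  -- summability of lr^2 and tsum facts
  have hsum : Summable (fun k : ℕ => lr k ^ 2) := by
    have h1 : Summable (fun n : ℕ => (((n : ℝ)) ^ (p + p))⁻¹) :=
      Real.summable_nat_rpow_inv.2 (by linarith)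
    have h2 : Summable (fun k : ℕ => ((((k : ℕ) + 1 : ℕ) : ℝ) ^ (p + p))⁻¹) :=
      h1.comp_injective (add_left_injective 1)
    have h3 : Summable (fun k : ℕ => ((1 - Real.sin α) / (L * B * E')) ^ 2 *
        ((((k : ℝ)) + 1) ^ (p + p))⁻¹) := by
      refine (h2.mul_left (((1 - Real.sin α) / (L * B * E')) ^ 2)).congr fun k => ?_
      push_cast
      ring
    refine h3.congr fun k => ?_
    have hpos : (0:ℝ) < (k:ℝ) + 1 := by positivity
    have hrp : (0:ℝ) < ((k:ℝ) + 1) ^ (p + p) := Real.rpow_pos_of_pos hpos _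
    have key : (((k:ℝ) + 1) ^ p) ^ 2 = ((k:ℝ) + 1) ^ (p + p) := by
      rw [pow_two, ← Real.rpow_add hpos]
    have hne : ((k:ℝ) + 1) ^ p ≠ 0 := (hrpow_pos k).ne'
    rw [hlr k, ← key]
    field_simp
  set Q := ∑' k : ℕ, lr k ^ 2 with hQdef
  have hQ0 : 0 ≤ Q := tsum_nonneg fun k => sq_nonneg _
  have hQle : ∀ K : ℕ, ∑ k ∈ Finset.range K, lr k ^ 2 ≤ Q :=
    fun K => hsum.sum_le_tsum _ (fun k _ => sq_nonneg _)

  -- measurability and integrability facts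
  have hw_sm : ∀ k, StronglyMeasurable[mΩ] (w k) := fun k => (hw_meas k).mono (ℱ.le k)
  have hAgg_eq : ∀ k, Agg k = fun ω => (lr k)⁻¹ • (w k ω - w (k + 1) ω) := by
    intro k; funext ω
    have h := hupdate k ω
    have h2 : w k ω - w (k + 1) ω = lr k • Agg k ω := by rw [h]; abel
    rw [h2, inv_smul_smul₀ (hlr_pos k).ne']
  have hAgg_sm : ∀ k, StronglyMeasurable[mΩ] (Agg k) := by
    intro k
    rw [hAgg_eq k]
    exact ((hw_sm k).sub (hw_sm (k + 1))).const_smul (lr k)⁻¹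
  have hgc : Continuous (gradient F) := my_grad_cont F L hL.le hF_lip
  have hgw_sm : ∀ k, StronglyMeasurable[mΩ] (fun ω => gradient F (w k ω)) :=
    fun k => hgc.comp_stronglyMeasurable (hw_sm k)
  have hgw_smF : ∀ k, StronglyMeasurable[ℱ k] (fun ω => gradient F (w k ω)) :=
    fun k => hgc.comp_stronglyMeasurable (hw_meas k)
  have hnormsq_cont : Continuous (fun x : EuclideanSpace ℝ (Fin d) => ‖x‖ ^ 2) :=
    (continuous_norm).pow 2
  have hWsq : ∀ k, Integrable (fun ω => ‖w k ω‖ ^ 2) μ := by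
    intro k
    induction k with
    | zero =>
      refine (integrable_const (‖w0‖ ^ 2)).congr ?_
      exact Filter.Eventually.of_forall fun ω => by simp [hw0 ω]
    | succ k ih =>
      refine Integrable.mono' ((ih.const_mul 2).add ((hAgg_int k).const_mul (2 * lr k ^ 2)))
        (hnormsq_cont.comp_stronglyMeasurable (hw_sm (k + 1))).aestronglyMeasurable ?_
      refine Filter.Eventually.of_forall fun ω => ?_
      simp only [Pi.add_apply]
      rw [hupdate k ω, Real.norm_eq_abs, abs_of_nonneg (sq_nonneg _)]
      have h1 : ‖w k ω - lr k • Agg k ω‖ ≤ ‖w k ω‖ + lr k * ‖Agg k ω‖ := by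
        refine (norm_sub_le _ _).trans ?_
        rw [norm_smul, Real.norm_eq_abs, abs_of_nonneg (hlr_pos k).le]
      nlinarith [norm_nonneg (w k ω), norm_nonneg (Agg k ω), norm_nonneg (w k ω - lr k • Agg k ω),
        mul_nonneg (hlr_pos k).le (norm_nonneg (Agg k ω)), sq_nonneg (‖w k ω‖ - lr k * ‖Agg k ω‖)]
  have hW1 : ∀ k, Integrable (fun ω => ‖w k ω‖) μ := by
    intro k
    refine Integrable.mono' ((integrable_const (1:ℝ)).add (hWsq k))
      ((hw_sm k).norm).aestronglyMeasurable ?_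
    refine Filter.Eventually.of_forall fun ω => ?_
    simp only [Pi.add_apply]
    rw [Real.norm_eq_abs, abs_of_nonneg (norm_nonneg _)]
    nlinarith [sq_nonneg (‖w k ω‖ - 1), norm_nonneg (w k ω)]
  have hgrad_bound : ∀ x : EuclideanSpace ℝ (Fin d),
      ‖gradient F x‖ ≤ ‖gradient F 0‖ + L * ‖x‖ := by
    intro x
    have := hF_lip x 0
    have h2 := norm_sub_norm_le (gradient F x) (gradient F 0)
    simp only [sub_zero] at this
    linarith
  have hGsq : ∀ k, Integrable (fun ω => ‖gradient F (w k ω)‖ ^ 2) μ := by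
    intro k
    refine Integrable.mono' ((integrable_const (2 * ‖gradient F 0‖ ^ 2)).add
      ((hWsq k).const_mul (2 * L ^ 2)))
      (hnormsq_cont.comp_stronglyMeasurable (hgw_sm k)).aestronglyMeasurable ?_
    refine Filter.Eventually.of_forall fun ω => ?_
    simp only [Pi.add_apply]
    rw [Real.norm_eq_abs, abs_of_nonneg (sq_nonneg _)]
    nlinarith [hgrad_bound (w k ω), norm_nonneg (gradient F (w k ω)), norm_nonneg (w k ω),
      mul_nonneg hL.le (norm_nonneg (w k ω)), sq_nonneg (‖gradient F 0‖ - L * ‖w k ω‖)]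
  have hGnorm : ∀ k, Integrable (fun ω => ‖gradient F (w k ω)‖) μ := by
    intro k
    refine Integrable.mono' ((integrable_const (1:ℝ)).add (hGsq k))
      ((hgw_sm k).norm).aestronglyMeasurable ?_
    refine Filter.Eventually.of_forall fun ω => ?_
    simp only [Pi.add_apply]
    rw [Real.norm_eq_abs, abs_of_nonneg (norm_nonneg _)]
    nlinarith [sq_nonneg (‖gradient F (w k ω)‖ - 1), norm_nonneg (gradient F (w k ω))]
  have hAgg1 : ∀ k, Integrable (Agg k) μ := by
    intro k
    refine Integrable.mono' ((integrable_const (1:ℝ)).add (hAgg_int k))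
      (hAgg_sm k).aestronglyMeasurable ?_
    refine Filter.Eventually.of_forall fun ω => ?_
    simp only [Pi.add_apply]
    nlinarith [sq_nonneg (‖Agg k ω‖ - 1), norm_nonneg (Agg k ω)]
  have hFup : ∀ x : EuclideanSpace ℝ (Fin d),
      F x ≤ F 0 + ‖gradient F 0‖ * ‖x‖ + L / 2 * ‖x‖ ^ 2 := by
    intro x
    have h := my_descent F L hL.le hF_diff hF_lip 0 x
    simp only [zero_add] at h
    have h2 : ⟪gradient F 0, x⟫ ≤ ‖gradient F 0‖ * ‖x‖ := real_inner_le_norm _ _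
    linarith
  have hFw : ∀ k, Integrable (fun ω => F (w k ω)) μ := by
    intro k
    refine Integrable.mono' (((integrable_const (|Flow| + |F 0|)).add
      ((hW1 k).const_mul ‖gradient F 0‖)).add ((hWsq k).const_mul (L / 2)))
      ((hF_diff.continuous.comp_stronglyMeasurable (hw_sm k))).aestronglyMeasurable ?_
    refine Filter.Eventually.of_forall fun ω => ?_
    simp only [Pi.add_apply]
    rw [Real.norm_eq_abs, abs_le]
    constructor
    · have := hF_low (w k ω)
      have h1 : 0 ≤ ‖gradient F 0‖ * ‖w k ω‖ :=
        mul_nonneg (norm_nonneg _) (norm_nonneg _)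
      have h2 : 0 ≤ L / 2 * ‖w k ω‖ ^ 2 := by positivity
      have h3 : -|Flow| ≤ Flow := neg_abs_le Flow
      have h4 : (0:ℝ) ≤ |F 0| := abs_nonneg _
      linarith
    · have := hFup (w k ω)
      have h3 : F 0 ≤ |F 0| := le_abs_self _
      have h4 : (0:ℝ) ≤ |Flow| := abs_nonneg _
      linarith
  have hinner_int : ∀ k, Integrable (fun ω => ⟪gradient F (w k ω), Agg k ω⟫) μ := by
    intro k
    refine Integrable.mono' (((hGsq k).add (hAgg_int k)).div_const 2)
      ((hgw_sm k).inner (hAgg_sm k)).aestronglyMeasurable ?_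
    refine Filter.Eventually.of_forall fun ω => ?_
    simp only [Pi.add_apply]
    rw [Real.norm_eq_abs]
    have h1 := abs_real_inner_le_norm (gradient F (w k ω)) (Agg k ω)
    nlinarith [sq_nonneg (‖gradient F (w k ω)‖ - ‖Agg k ω‖), norm_nonneg (gradient F (w k ω)),
      norm_nonneg (Agg k ω)]

  have htrim : ∀ k : ℕ, SigmaFinite (μ.trim (ℱ.le k)) := fun k => by
    have : IsFiniteMeasure (μ.trim (ℱ.le k)) := isFiniteMeasure_trim _
    infer_instance
  set gk : ℕ → ℝ := fun k => ∫ ω, ‖gradient F (w k ω)‖ ^ 2 ∂μ with hgkdef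
  set Fk : ℕ → ℝ := fun k => ∫ ω, F (w k ω) ∂μ with hFkdef
  have hgk0 : ∀ k, 0 ≤ gk k := fun k => integral_nonneg fun ω => sq_nonneg _
  have hFklow : ∀ k, Flow ≤ Fk k := by
    intro k
    have h : ∫ _ω, Flow ∂μ ≤ ∫ ω, F (w k ω) ∂μ :=
      integral_mono (integrable_const _) (hFw k) fun ω => hF_low _
    simpa using h
  have hstepA : ∀ k, (1 - Real.sin α) * gk k
      ≤ ∫ ω, ⟪gradient F (w k ω), Agg k ω⟫ ∂μ := by
    intro k
    obtain ⟨hint, heq⟩ :=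
      my_integral_inner_condexp (ℱ.le k) (hgw_smF k) (hAgg1 k) (hAgg_int k) (hGsq k)
    rw [heq]
    have h : ∫ ω, (1 - Real.sin α) * ‖gradient F (w k ω)‖ ^ 2 ∂μ
        ≤ ∫ ω, ⟪(μ[Agg k|ℱ k]) ω, gradient F (w k ω)⟫ ∂μ :=
      integral_mono_ae ((hGsq k).const_mul _) hint
        (by filter_upwards [hi k] with ω h; exact h)
    rwa [MeasureTheory.integral_const_mul] at h
  have hstepB : ∀ k, ∫ ω, ‖Agg k ω‖ ^ 2 ∂μ
      ≤ E' * (2 * A * (Fk k - Flow) + B * gk k + C) := by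
    intro k
    haveI := htrim k
    have h1 : ∫ ω, ‖Agg k ω‖ ^ 2 ∂μ
        = ∫ ω, (μ[fun ω' => ‖Agg k ω'‖ ^ 2|ℱ k]) ω ∂μ := (integral_condExp (ℱ.le k)).symm
    have hrhs_int : Integrable (fun ω =>
        E' * (2 * A * (F (w k ω) - Flow) + B * ‖gradient F (w k ω)‖ ^ 2 + C)) μ :=
      ((((hFw k).sub (integrable_const Flow)).const_mul (2 * A)).add
        (((hGsq k).const_mul B)) |>.add (integrable_const C)).const_mul E'
    have h2 : ∫ ω, (μ[fun ω' => ‖Agg k ω'‖ ^ 2|ℱ k]) ω ∂μ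
        ≤ ∫ ω, E' * (2 * A * (F (w k ω) - Flow) + B * ‖gradient F (w k ω)‖ ^ 2 + C) ∂μ := by
      refine integral_mono_ae integrable_condExp hrhs_int ?_
      filter_upwards [hii k, hiv k] with ω hii' hiv'
      exact hii'.trans (mul_le_mul_of_nonneg_left hiv' hE')
    have h3 : ∫ ω, E' * (2 * A * (F (w k ω) - Flow) + B * ‖gradient F (w k ω)‖ ^ 2 + C) ∂μ
        = E' * (2 * A * (Fk k - Flow) + B * gk k + C) := by
      rw [MeasureTheory.integral_const_mul]
      congr 1
      have iF : Integrable (fun ω => F (w k ω) - Flow) μ := by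
        exact (hFw k).sub (integrable_const Flow)
      have i1 : Integrable (fun ω => 2 * A * (F (w k ω) - Flow)) μ := by
        exact iF.const_mul _
      have i2 : Integrable (fun ω => B * ‖gradient F (w k ω)‖ ^ 2) μ := by
        exact (hGsq k).const_mul _
      have i12 : Integrable
          (fun ω => 2 * A * (F (w k ω) - Flow) + B * ‖gradient F (w k ω)‖ ^ 2) μ := by
        exact i1.add i2
      rw [integral_add i12 (integrable_const C), integral_add i1 i2,
        MeasureTheory.integral_const_mul, MeasureTheory.integral_const_mul,
        integral_sub (hFw k) (integrable_const Flow), integral_const]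
      simp [measure_univ]
      rfl
    rw [h1]
    exact h2.trans (le_of_eq h3)
  have hdesc : ∀ k, Fk (k + 1) ≤ Fk k
      - lr k * ∫ ω, ⟪gradient F (w k ω), Agg k ω⟫ ∂μ
      + L / 2 * lr k ^ 2 * ∫ ω, ‖Agg k ω‖ ^ 2 ∂μ := by
    intro k
    have hpt : ∀ ω, F (w (k + 1) ω) ≤ F (w k ω)
        - lr k * ⟪gradient F (w k ω), Agg k ω⟫ + L / 2 * lr k ^ 2 * ‖Agg k ω‖ ^ 2 := by
      intro ω
      have h := my_descent F L hL.le hF_diff hF_lip (w k ω) (-(lr k • Agg k ω))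
      rw [← sub_eq_add_neg] at h
      rw [hupdate k ω]
      have h2 : ⟪gradient F (w k ω), -(lr k • Agg k ω)⟫
          = -(lr k * ⟪gradient F (w k ω), Agg k ω⟫) := by
        rw [inner_neg_right, real_inner_smul_right]
      have h3 : ‖-(lr k • Agg k ω)‖ ^ 2 = lr k ^ 2 * ‖Agg k ω‖ ^ 2 := by
        rw [norm_neg, norm_smul, Real.norm_eq_abs, mul_pow, sq_abs]
      rw [h2, h3] at h
      linarith
    have hint2 : ∫ ω, F (w (k + 1) ω) ∂μ
        ≤ ∫ ω, (F (w k ω) - lr k * ⟪gradient F (w k ω), Agg k ω⟫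
            + L / 2 * lr k ^ 2 * ‖Agg k ω‖ ^ 2) ∂μ :=
      integral_mono (hFw (k + 1)) (by
        have j1 : Integrable (fun ω => lr k * ⟪gradient F (w k ω), Agg k ω⟫) μ := by
          exact (hinner_int k).const_mul _
        have j2 : Integrable
            (fun ω => F (w k ω) - lr k * ⟪gradient F (w k ω), Agg k ω⟫) μ := by
          exact (hFw k).sub j1
        have j3 : Integrable (fun ω => L / 2 * lr k ^ 2 * ‖Agg k ω‖ ^ 2) μ := by
          exact (hAgg_int k).const_mul _
        exact j2.add j3) hpt
    have j1 : Integrable (fun ω => lr k * ⟪gradient F (w k ω), Agg k ω⟫) μ := by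
      exact (hinner_int k).const_mul _
    have j2 : Integrable
        (fun ω => F (w k ω) - lr k * ⟪gradient F (w k ω), Agg k ω⟫) μ := by
      exact (hFw k).sub j1
    have j3 : Integrable (fun ω => L / 2 * lr k ^ 2 * ‖Agg k ω‖ ^ 2) μ := by
      exact (hAgg_int k).const_mul _
    rw [integral_add j2 j3, integral_sub (hFw k) j1,
      MeasureTheory.integral_const_mul, MeasureTheory.integral_const_mul] at hint2
    exact hint2
  have hmain : ∀ k, Fk (k + 1) - Flow
      ≤ (1 + L * (A * E') * lr k ^ 2) * (Fk k - Flow)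
        + L / 2 * (C * E') * lr k ^ 2 - lr k / 2 * (1 - Real.sin α) * gk k := by
    intro k
    have hA' := hstepA k
    have hB' := hstepB k
    have hd' := hdesc k
    have h1' := mul_le_mul_of_nonneg_left hA' (hlr_pos k).le
    have hc2 : (0:ℝ) ≤ L / 2 * lr k ^ 2 := by positivity
    have h2' := mul_le_mul_of_nonneg_left hB' hc2
    have h3 : L / 2 * lr k ^ 2 * (E' * B) * gk k
        ≤ lr k / 2 * (1 - Real.sin α) * gk k := by
      have hmul := mul_le_mul_of_nonneg_left (hlr_mulD k)
        (mul_nonneg (by linarith [hlr_pos k] : (0:ℝ) ≤ lr k / 2) (hgk0 k))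
      nlinarith [hmul]
    nlinarith [hd', h1', h2', h3]

  -- the product / sum induction
  set c : ℝ := L * (A * E') with hcdef
  have hc_nn : 0 ≤ c := by positivity
  set P : ℕ → ℝ := fun K => ∏ k ∈ Finset.range K, (1 + c * lr k ^ 2) with hPdef
  have hP1 : ∀ K, 1 ≤ P K := by
    intro K
    simp only [hPdef]
    induction K with
    | zero => simp
    | succ K ih =>
      rw [Finset.prod_range_succ]
      nlinarith [mul_nonneg hc_nn (sq_nonneg (lr K)), ih]
  have hind : ∀ K : ℕ, (Fk K - Flow) + ∑ k ∈ Finset.range K, lr k / 2 * (1 - Real.sin α) * gk k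
      ≤ P K * ((Fk 0 - Flow) + L / 2 * (C * E') * ∑ k ∈ Finset.range K, lr k ^ 2) := by
    intro K
    induction K with
    | zero => simp [hPdef]
    | succ K ih =>
      have hm := hmain K
      have hSnn : 0 ≤ ∑ k ∈ Finset.range K, lr k / 2 * (1 - Real.sin α) * gk k :=
        Finset.sum_nonneg fun k _ =>
          mul_nonneg (mul_nonneg (by linarith [hlr_pos k]) hc0.le) (hgk0 k)
      have hPK : P (K + 1) = P K * (1 + c * lr K ^ 2) := by
        simp only [hPdef]
        exact Finset.prod_range_succ _ _
      have hQK : (∑ k ∈ Finset.range (K + 1), lr k ^ 2)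
          = (∑ k ∈ Finset.range K, lr k ^ 2) + lr K ^ 2 := Finset.sum_range_succ _ _
      have hSK : (∑ k ∈ Finset.range (K + 1), lr k / 2 * (1 - Real.sin α) * gk k)
          = (∑ k ∈ Finset.range K, lr k / 2 * (1 - Real.sin α) * gk k)
            + lr K / 2 * (1 - Real.sin α) * gk K := Finset.sum_range_succ _ _
      rw [hPK, hQK, hSK]
      have hδ0 : 0 ≤ Fk 0 - Flow := by linarith [hFklow 0]
      have hQKnn : 0 ≤ ∑ k ∈ Finset.range K, lr k ^ 2 :=
        Finset.sum_nonneg fun k _ => sq_nonneg _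
      have hfac : 0 ≤ 1 + c * lr K ^ 2 := by nlinarith [sq_nonneg (lr K), hc_nn]
      have hstep2 : ((Fk K - Flow) + ∑ k ∈ Finset.range K, lr k / 2 * (1 - Real.sin α) * gk k)
            * (1 + c * lr K ^ 2)
          ≤ P K * ((Fk 0 - Flow) + L / 2 * (C * E') * ∑ k ∈ Finset.range K, lr k ^ 2)
            * (1 + c * lr K ^ 2) :=
        mul_le_mul_of_nonneg_right ih hfac
      have hδK : 0 ≤ Fk K - Flow := by linarith [hFklow K]
      have hPK1 : 1 ≤ P K * (1 + c * lr K ^ 2) := by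
        calc (1:ℝ) ≤ P K := hP1 K
        _ ≤ P K * (1 + c * lr K ^ 2) := by
          nlinarith [hP1 K, mul_nonneg hc_nn (sq_nonneg (lr K))]
      have hr_nn : (0:ℝ) ≤ L / 2 * (C * E') * lr K ^ 2 := by positivity
      linarith [hstep2, hm, mul_nonneg (mul_nonneg hc_nn (sq_nonneg (lr K))) hSnn,
        mul_nonneg (sub_nonneg.2 hPK1) hr_nn]

  -- exponential bound on the product
  have hPexp : ∀ K, P K ≤ Real.exp (c * Q) := by
    intro K
    have h1 : P K ≤ ∏ k ∈ Finset.range K, Real.exp (c * lr k ^ 2) := by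
      simp only [hPdef]
      refine Finset.prod_le_prod (fun k _ => by
        nlinarith [mul_nonneg hc_nn (sq_nonneg (lr k))]) fun k _ => by
        linarith [Real.add_one_le_exp (c * lr k ^ 2)]
    have h2 : ∏ k ∈ Finset.range K, Real.exp (c * lr k ^ 2)
        = Real.exp (∑ k ∈ Finset.range K, c * lr k ^ 2) := (Real.exp_sum _ _).symm
    have h3 : (∑ k ∈ Finset.range K, c * lr k ^ 2) ≤ c * Q := by
      rw [← Finset.mul_sum]
      exact mul_le_mul_of_nonneg_left (hQle K) hc_nn
    calc P K ≤ ∏ k ∈ Finset.range K, Real.exp (c * lr k ^ 2) := h1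
      _ = Real.exp (∑ k ∈ Finset.range K, c * lr k ^ 2) := h2
      _ ≤ Real.exp (c * Q) := Real.exp_le_exp.2 h3
  have hFk0 : Fk 0 = F w0 := by
    simp only [hFkdef]
    rw [show (fun ω => F (w 0 ω)) = fun _ω : Ω => F w0 from funext fun ω => by rw [hw0 ω]]
    simp [measure_univ]
  have hδ0 : 0 ≤ F w0 - Flow := by linarith [hF_low w0]
  have hSfinal : ∀ K, ∑ k ∈ Finset.range K, lr k / 2 * (1 - Real.sin α) * gk k
      ≤ Real.exp (c * Q) * ((F w0 - Flow) + L / 2 * (C * E') * Q) := by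
    intro K
    have h1 := hind K
    have h2 : 0 ≤ Fk K - Flow := by linarith [hFklow K]
    have h3 : (Fk 0 - Flow) + L / 2 * (C * E') * (∑ k ∈ Finset.range K, lr k ^ 2)
        ≤ (F w0 - Flow) + L / 2 * (C * E') * Q := by
      rw [hFk0]
      have := mul_le_mul_of_nonneg_left (hQle K) (by positivity : (0:ℝ) ≤ L / 2 * (C * E'))
      linarith
    have h4 : 0 ≤ (Fk 0 - Flow) + L / 2 * (C * E') * (∑ k ∈ Finset.range K, lr k ^ 2) := by
      rw [hFk0]
      have h5 : 0 ≤ L / 2 * (C * E') * (∑ k ∈ Finset.range K, lr k ^ 2) :=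
        mul_nonneg (by positivity) (Finset.sum_nonneg fun k _ => sq_nonneg _)
      linarith
    calc ∑ k ∈ Finset.range K, lr k / 2 * (1 - Real.sin α) * gk k
        ≤ P K * ((Fk 0 - Flow) + L / 2 * (C * E') * ∑ k ∈ Finset.range K, lr k ^ 2) := by
          linarith
      _ ≤ Real.exp (c * Q) * ((F w0 - Flow) + L / 2 * (C * E') * Q) := by
          refine mul_le_mul (hPexp K) h3 h4 (Real.exp_nonneg _)
  -- the main per-K bound
  have hpart1 : ∀ K : ℕ, 1 ≤ K →
      (⨅ k : Fin K, ∫ ω, ‖gradient F (w k ω)‖ ∂μ) ≤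
        (Real.exp (c * Q) * (2 * (F w0 - Flow) + L * (C * E') * Q) /
          ((1 - Real.sin α) * lr 0)) ^ ((1 : ℝ) / 2) * (K : ℝ) ^ (-((1 - p) / 2)) := by
    intro K hK
    set u : ℕ → ℝ := fun k => ∫ ω, ‖gradient F (w k ω)‖ ∂μ with hu_def
    have hu0 : ∀ k, 0 ≤ u k := fun k => integral_nonneg fun ω => norm_nonneg _
    have husq : ∀ k, u k ^ 2 ≤ gk k := fun k => my_sq_integral_le μ (hGnorm k) (hGsq k)
    obtain ⟨kst, hkmem, hkmin⟩ := Finset.exists_min_image (Finset.range K) u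
      ⟨0, Finset.mem_range.2 hK⟩
    have hKpos : (0:ℝ) < (K:ℝ) := by
      have h : 0 < K := hK
      exact_mod_cast h
    have hterm : ∀ k ∈ Finset.range K,
        lr (K - 1) / 2 * (1 - Real.sin α) * u kst ^ 2
          ≤ lr k / 2 * (1 - Real.sin α) * gk k := by
      intro k hk
      have hkK : k ≤ K - 1 := by
        have := Finset.mem_range.1 hk; omega
      have h1 : lr (K - 1) ≤ lr k := hlr_anti k (K - 1) hkK
      have h2 : u kst ^ 2 ≤ gk k :=
        (pow_le_pow_left₀ (hu0 kst) (hkmin k hk) 2).trans (husq k)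
      have h4 := sq_nonneg (u kst)
      have h5 : lr (K - 1) * u kst ^ 2 ≤ lr k * gk k :=
        mul_le_mul h1 h2 h4 (hlr_pos k).le
      have h6 := mul_le_mul_of_nonneg_left h5
        (by linarith : (0:ℝ) ≤ (1 - Real.sin α) / 2)
      linarith
    have hsum_lb : (K:ℝ) * (lr (K - 1) / 2 * (1 - Real.sin α) * u kst ^ 2)
        ≤ ∑ k ∈ Finset.range K, lr k / 2 * (1 - Real.sin α) * gk k := by
      have h := Finset.card_nsmul_le_sum (Finset.range K) _ _ hterm
      simpa [Finset.card_range, nsmul_eq_mul] using h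
    -- identify K * lr (K-1)
    have hK1 : ((K - 1 : ℕ):ℝ) + 1 = (K:ℝ) := by
      have h : (K - 1) + 1 = K := Nat.succ_pred_eq_of_pos hK
      exact_mod_cast congrArg (Nat.cast : ℕ → ℝ) h
    have hlrK1 : lr (K - 1) = (1 - Real.sin α) / (L * B * E' * (K:ℝ) ^ p) := by
      rw [hlr (K - 1), hK1]
    have hlr0v : lr 0 = (1 - Real.sin α) / (L * B * E') := by
      rw [hlr 0]
      norm_num [Real.one_rpow]
    have hKp : (0:ℝ) < (K:ℝ) ^ p := Real.rpow_pos_of_pos hKpos p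
    have hKlr : (K:ℝ) * lr (K - 1) = lr 0 * (K:ℝ) ^ (1 - p) := by
      rw [hlrK1, hlr0v, Real.rpow_sub hKpos, Real.rpow_one]
      field_simp
    -- conclude the squared bound
    set X : ℝ := Real.exp (c * Q) * (2 * (F w0 - Flow) + L * (C * E') * Q) with hXdef
    have hX0 : 0 ≤ X := by
      have : 0 ≤ 2 * (F w0 - Flow) + L * (C * E') * Q := by positivity
      positivity
    have hXeq : X = 2 * (Real.exp (c * Q) * ((F w0 - Flow) + L / 2 * (C * E') * Q)) := by
      rw [hXdef]; ring
    have hchain : (1 - Real.sin α) * lr 0 * (K:ℝ) ^ (1 - p) * u kst ^ 2 ≤ X := by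
      have h1 := hsum_lb.trans (hSfinal K)
      rw [hXeq]
      calc (1 - Real.sin α) * lr 0 * (K:ℝ) ^ (1 - p) * u kst ^ 2
          = 2 * ((K:ℝ) * (lr (K - 1) / 2 * (1 - Real.sin α) * u kst ^ 2)) := by
            rw [show (K:ℝ) * (lr (K - 1) / 2 * (1 - Real.sin α) * u kst ^ 2)
                = ((K:ℝ) * lr (K - 1)) * (1 - Real.sin α) * u kst ^ 2 / 2 by ring, hKlr]
            ring
        _ ≤ 2 * (Real.exp (c * Q) * ((F w0 - Flow) + L / 2 * (C * E') * Q)) := by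
            linarith
    have hden : (0:ℝ) < (1 - Real.sin α) * lr 0 * (K:ℝ) ^ (1 - p) :=
      mul_pos (mul_pos hc0 (hlr_pos 0)) (Real.rpow_pos_of_pos hKpos _)
    have hfrac : u kst ^ 2 ≤ X / ((1 - Real.sin α) * lr 0) * ((K:ℝ) ^ (-(1 - p))) := by
      have h6 : u kst ^ 2 ≤ X / ((1 - Real.sin α) * lr 0 * (K:ℝ) ^ (1 - p)) := by
        rw [le_div_iff₀ hden]
        nlinarith [hchain]
      calc u kst ^ 2 ≤ X / ((1 - Real.sin α) * lr 0 * (K:ℝ) ^ (1 - p)) := h6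
        _ = X / ((1 - Real.sin α) * lr 0) * ((K:ℝ) ^ ((1:ℝ) - p))⁻¹ := by
            rw [div_mul_eq_div_div, div_eq_mul_inv]
        _ = X / ((1 - Real.sin α) * lr 0) * (K:ℝ) ^ (-(1 - p)) := by
            rw [Real.rpow_neg hKpos.le]
    -- take square roots
    have hXC0 : 0 ≤ X / ((1 - Real.sin α) * lr 0) :=
      div_nonneg hX0 (mul_pos hc0 (hlr_pos 0)).le
    have hroot : u kst ≤ (X / ((1 - Real.sin α) * lr 0)) ^ ((1:ℝ)/2)
        * (K:ℝ) ^ (-((1 - p) / 2)) := by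
      have h1 : u kst = (u kst ^ 2) ^ ((1:ℝ)/2) := by
        rw [← Real.rpow_natCast (u kst) 2, ← Real.rpow_mul (hu0 kst)]
        norm_num
      rw [h1]
      have h2 : (u kst ^ 2) ^ ((1:ℝ)/2)
          ≤ (X / ((1 - Real.sin α) * lr 0) * (K:ℝ) ^ (-(1 - p))) ^ ((1:ℝ)/2) :=
        Real.rpow_le_rpow (sq_nonneg _) hfrac (by norm_num)
      refine h2.trans (le_of_eq ?_)
      rw [Real.mul_rpow hXC0 (Real.rpow_nonneg hKpos.le _),
        ← Real.rpow_mul hKpos.le, show -(1 - p) * ((1:ℝ)/2) = -((1 - p)/2) by ring]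
    -- infimum over Fin K
    haveI hne : Nonempty (Fin K) := ⟨⟨0, hK⟩⟩
    have hinf : (⨅ k : Fin K, ∫ ω, ‖gradient F (w k ω)‖ ∂μ) ≤ u kst := by
      have hbdd : BddBelow (Set.range fun k : Fin K => ∫ ω, ‖gradient F (w k ω)‖ ∂μ) := by
        refine ⟨0, ?_⟩
        rintro x ⟨k, rfl⟩
        exact integral_nonneg fun ω => norm_nonneg _
      have := ciInf_le hbdd (⟨kst, Finset.mem_range.1 hkmem⟩ : Fin K)
      exact this
    exact hinf.trans hroot
  refine ⟨hpart1, ?_⟩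
  rw [Asymptotics.isBigO_iff]
  refine ⟨(Real.exp (c * Q) * (2 * (F w0 - Flow) + L * (C * E') * Q) /
      ((1 - Real.sin α) * lr 0)) ^ ((1:ℝ)/2), ?_⟩
  filter_upwards [eventually_ge_atTop 1] with K hK
  have h := hpart1 K hK
  have hrp : (0:ℝ) ≤ (K:ℝ) ^ (-((1 - p)/2)) := Real.rpow_nonneg (Nat.cast_nonneg K) _
  have hf0 : 0 ≤ ⨅ k : Fin K, ∫ ω, ‖gradient F (w k ω)‖ ∂μ :=
    Real.iInf_nonneg fun k => integral_nonneg fun ω => norm_nonneg _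
  rw [Real.norm_eq_abs, Real.norm_eq_abs, abs_of_nonneg hf0, abs_of_nonneg hrp]
  exact h
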